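/- Under the same setup (n ≥ 1 a positive integer, k > 0 real, η₂ ∈ ℂ nonzero, φ₀ = απ with α ∈ (0,2)\{1}, and c_n^0, c_n^1 the nonzero spherical-harmonic normalization constants), the 3×3 matrix B_n with entries b₁₁ = -η₂ n(n+1)² c_n^1 cos²φ₀/(2(2n+1)√(n(n+1))), b₁₂ = i η₂ n(n+1)² c_n^1 sinφ₀cosφ₀/(2(2n+1)√(n(n+1))), b₁₃ = i k √(n(n+1)) c_n^0 cosφ₀/(2n+1), b₂₁ = η₂ n(n+1)² c_n^1 sinφ₀cosφ₀/(2(2n+1)√(n(n+1))), b₂₂ = i η₂ n(n+1)² c_n^1 sin²φ₀/(2(2n+1)√(n(n+1))), b₂₃ = i k √(n(n+1)) c_n^0 sinφ₀/(2n+1), b₃₁ = -n(n+1)² c_n^1 (-η₁ + η₂cosφ₀)/(2(2n+1)√(n(n+1))), b₃₂ = i η₂ n(n+1)² c_n^1 sinφ₀/(2(2n+1)√(n(n+1))), b₃₃ = 0, has determinant det B_n = -k·η₂²·((n+1)/(2n+1))³·(n√(n(n+1))/2)·(c_n^1)²·c_n^0·sin²φ₀·cos²φ₀. In particular, if additionally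 α ∉ {1/2, 3/2}, k > 0 and η₂ ≠ 0, then B_n is invertible. -/

import Mathlib

open Real Complex Matrix

/-- Determinant of the matrix `B_n` arising from the impedance conditions at an edge-corner:
`det B_n = -k η₂² ((n+1)/(2n+1))³ (n √(n(n+1))/2) (c_n^1)² c_n^0 sin²φ₀ cos²φ₀`; in particular
`B_n` is invertible when additionally `α ∉ {1/2, 3/2}`. -/
theorem det_Bn (n : ℕ) (hn : 1 ≤ n) (k : ℝ) (hk : 0 < k) (η₁ η₂ : ℂ) (hη₂ : η₂ ≠ 0)
    (α : ℝ) (hα : α ∈ Set.Ioo (0 : ℝ) 2) (hα1 : α ≠ 1)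
    (φ₀ : ℝ) (hφ₀ : φ₀ = α * π)
    (s : ℝ) (hs : s = Real.sqrt (n * (n + 1)))
    (c0 : ℝ) (hc0 : c0 = Real.sqrt ((2 * n + 1) / (4 * π)))
    (c1 : ℝ) (hc1 : c1 = Real.sqrt ((2 * n + 1) / (4 * π) *
      ((Nat.factorial (n - 1) : ℝ) / (Nat.factorial (n + 1)))))
    (B : Matrix (Fin 3) (Fin 3) ℂ)
    (hB : B = !![-η₂ * n * ((n : ℂ) + 1) ^ 2 * c1 * (Real.cos φ₀ : ℂ) ^ 2
          / (2 * (2 * (n : ℂ) + 1) * s),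
        Complex.I * η₂ * n * ((n : ℂ) + 1) ^ 2 * c1 * (Real.sin φ₀ : ℂ) * (Real.cos φ₀ : ℂ)
          / (2 * (2 * (n : ℂ) + 1) * s),
        Complex.I * k * (s : ℂ) * c0 * (Real.cos φ₀ : ℂ) / (2 * (n : ℂ) + 1);
        η₂ * n * ((n : ℂ) + 1) ^ 2 * c1 * (Real.sin φ₀ : ℂ) * (Real.cos φ₀ : ℂ)
          / (2 * (2 * (n : ℂ) + 1) * s),
        Complex.I * η₂ * n * ((n : ℂ) + 1) ^ 2 * c1 * (Real.sin φ₀ : ℂ) ^ 2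
          / (2 * (2 * (n : ℂ) + 1) * s),
        Complex.I * k * (s : ℂ) * c0 * (Real.sin φ₀ : ℂ) / (2 * (n : ℂ) + 1);
        -(n : ℂ) * ((n : ℂ) + 1) ^ 2 * c1 * (-η₁ + η₂ * (Real.cos φ₀ : ℂ))
          / (2 * (2 * (n : ℂ) + 1) * s),
        Complex.I * η₂ * n * ((n : ℂ) + 1) ^ 2 * c1 * (Real.sin φ₀ : ℂ)
          / (2 * (2 * (n : ℂ) + 1) * s),
        0]) :
    B.det = -(k : ℂ) * η₂ ^ 2 * (((n : ℂ) + 1) / (2 * (n : ℂ) + 1)) ^ 3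
        * ((n : ℂ) * s / 2) * (c1 : ℂ) ^ 2 * (c0 : ℂ)
        * (Real.sin φ₀ : ℂ) ^ 2 * (Real.cos φ₀ : ℂ) ^ 2 ∧
      (α ≠ 1 / 2 → α ≠ 3 / 2 → IsUnit B) := by
  have hπ := Real.pi_pos
  have hNpos : (0 : ℝ) < (n : ℝ) * ((n : ℝ) + 1) := by positivity
  have hspos : 0 < s := by rw [hs]; positivity
  have hsR : s * s = (n : ℝ) * ((n : ℝ) + 1) := by
    rw [hs]; exact Real.mul_self_sqrt hNpos.le
  have hkey : (s : ℂ) * (s : ℂ) = (n : ℂ) * ((n : ℂ) + 1) := by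
    have := congrArg (Complex.ofReal) hsR
    push_cast at this ⊢
    exact this
  have hsne : (s : ℂ) ≠ 0 := by
    exact_mod_cast Complex.ofReal_ne_zero.mpr hspos.ne'
  have hn1 : ((n : ℂ) + 1) ≠ 0 := by
    have : ((n : ℝ) + 1) ≠ 0 := by positivity
    exact_mod_cast Complex.ofReal_ne_zero.mpr this
  have h2n1 : (2 * (n : ℂ) + 1) ≠ 0 := by
    have : ((2 * n + 1 : ℕ) : ℂ) ≠ 0 := Nat.cast_ne_zero.mpr (by omega)
    push_cast at this
    exact this
  have hrw : (n : ℂ) * s = (n : ℂ) * ((n : ℂ) * ((n : ℂ) + 1)) / s := by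
    rw [eq_div_iff hsne]
    linear_combination (n : ℂ) * hkey
  have hdet : B.det = -(k : ℂ) * η₂ ^ 2 * (((n : ℂ) + 1) / (2 * (n : ℂ) + 1)) ^ 3
        * ((n : ℂ) * s / 2) * (c1 : ℂ) ^ 2 * (c0 : ℂ)
        * (Real.sin φ₀ : ℂ) ^ 2 * (Real.cos φ₀ : ℂ) ^ 2 := by
    subst hB
    rw [Matrix.det_fin_three]
    simp only [Matrix.cons_val', Matrix.cons_val_zero, Matrix.cons_val_one, Matrix.head_cons,
      Matrix.empty_val', Matrix.cons_val_fin_one, Matrix.head_fin_const, Matrix.of_apply,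
      Matrix.cons_val_two, Matrix.tail_cons]
    rw [hrw]
    have hD : ((n : ℂ) * (s : ℂ) ^ 2 * 24 + (n : ℂ) ^ 2 * (s : ℂ) ^ 2 * 48
        + (n : ℂ) ^ 3 * (s : ℂ) ^ 2 * 32 + (s : ℂ) ^ 2 * 4) ≠ 0 := by
      have h4 : ((n : ℂ) * (s : ℂ) ^ 2 * 24 + (n : ℂ) ^ 2 * (s : ℂ) ^ 2 * 48
          + (n : ℂ) ^ 3 * (s : ℂ) ^ 2 * 32 + (s : ℂ) ^ 2 * 4)
          = 4 * (s : ℂ) ^ 2 * (2 * (n : ℂ) + 1) ^ 3 := by ring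
      rw [h4]
      exact mul_ne_zero (mul_ne_zero (by norm_num : (4:ℂ) ≠ 0) (pow_ne_zero _ hsne)) (pow_ne_zero _ h2n1)
    field_simp [hsne, h2n1, hD]
    have hA : (2 * (2 * (n : ℂ) + 1) * (s : ℂ) * (2 * (n : ℂ) + 1)
        * (2 * (2 * (n : ℂ) + 1) * (s : ℂ))) ≠ 0 :=
      mul_ne_zero (mul_ne_zero (mul_ne_zero (mul_ne_zero two_ne_zero h2n1) hsne) h2n1)
        (mul_ne_zero (mul_ne_zero two_ne_zero h2n1) hsne)
    have hB : ((2 * (n : ℂ) + 1) * (2 * (2 * (n : ℂ) + 1) * (s : ℂ))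
        * (2 * (2 * (n : ℂ) + 1) * (s : ℂ))) ≠ 0 :=
      mul_ne_zero (mul_ne_zero h2n1 (mul_ne_zero (mul_ne_zero two_ne_zero h2n1) hsne))
        (mul_ne_zero (mul_ne_zero two_ne_zero h2n1) hsne)
    ring_nf
    simp only [Complex.I_sq]
    ring
  refine ⟨hdet, fun hα2 hα3 => ?_⟩
  have hc0pos : 0 < c0 := by rw [hc0]; positivity
  have hc1pos : 0 < c1 := by
    rw [hc1]
    have h1 : (0 : ℝ) < (Nat.factorial (n - 1) : ℝ) := by positivity
    have h2 : (0 : ℝ) < (Nat.factorial (n + 1) : ℝ) := by positivity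
    positivity
  have hπne : π ≠ 0 := hπ.ne'
  have hsin : Real.sin φ₀ ≠ 0 := by
    intro h
    rw [hφ₀, Real.sin_eq_zero_iff] at h
    obtain ⟨m, hm⟩ := h
    have hm' : (m : ℝ) = α := mul_right_cancel₀ hπne hm
    have h0 : (0 : ℝ) < m := by rw [hm']; exact hα.1
    have h2 : (m : ℝ) < 2 := by rw [hm']; exact hα.2
    have h0i : (0 : ℤ) < m := by exact_mod_cast h0
    have h2i : m < 2 := by exact_mod_cast h2
    have hm1 : m = 1 := by omega
    apply hα1
    rw [← hm', hm1]
    norm_num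
  have hcos : Real.cos φ₀ ≠ 0 := by
    intro h
    rw [hφ₀, Real.cos_eq_zero_iff] at h
    obtain ⟨m, hm⟩ := h
    have hm2 : α * π = ((2 * (m : ℝ) + 1) / 2) * π := by rw [hm]; ring
    have hm' : α = (2 * (m : ℝ) + 1) / 2 := mul_right_cancel₀ hπne hm2
    have h0 : (0 : ℝ) < 2 * (m : ℝ) + 1 := by
      have := hα.1; rw [hm'] at this; linarith
    have h2 : 2 * (m : ℝ) + 1 < 4 := by
      have := hα.2; rw [hm'] at this; linarith
    have h0i : (0 : ℤ) ≤ m := by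
      by_contra hq
      push_neg at hq
      have hq' : m ≤ -1 := by omega
      have : (m : ℝ) ≤ -1 := by exact_mod_cast hq'
      linarith
    have h1i : m ≤ 1 := by
      by_contra hq
      push_neg at hq
      have hq' : (2 : ℤ) ≤ m := hq
      have : (2 : ℝ) ≤ (m : ℝ) := by exact_mod_cast hq'
      linarith
    interval_cases m
    · apply hα2; rw [hm']; norm_num
    · apply hα3; rw [hm']; norm_num
  have hSne : ((Real.sin φ₀ : ℝ) : ℂ) ≠ 0 := Complex.ofReal_ne_zero.mpr hsin
  have hCne : ((Real.cos φ₀ : ℝ) : ℂ) ≠ 0 := Complex.ofReal_ne_zero.mpr hcos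
  have hkne : (k : ℂ) ≠ 0 := Complex.ofReal_ne_zero.mpr hk.ne'
  have hnne : (n : ℂ) ≠ 0 := Nat.cast_ne_zero.mpr (by omega)
  have hc0ne : ((c0 : ℝ) : ℂ) ≠ 0 := Complex.ofReal_ne_zero.mpr hc0pos.ne'
  have hc1ne : ((c1 : ℝ) : ℂ) ≠ 0 := Complex.ofReal_ne_zero.mpr hc1pos.ne'
  rw [Matrix.isUnit_iff_isUnit_det, isUnit_iff_ne_zero, hdet]
  apply mul_ne_zero
  apply mul_ne_zero
  apply mul_ne_zero
  apply mul_ne_zero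
  apply mul_ne_zero
  apply mul_ne_zero
  apply mul_ne_zero
  · exact neg_ne_zero.mpr hkne
  · exact pow_ne_zero _ hη₂
  · exact pow_ne_zero _ (div_ne_zero hn1 h2n1)
  · exact div_ne_zero (mul_ne_zero hnne hsne) two_ne_zero
  · exact pow_ne_zero _ hc1ne
  · exact hc0ne
  · exact pow_ne_zero _ hSne
  · exact pow_ne_zero _ hCne
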